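/- arXiv:2404.16430 — 4 statements merged into one kernel-verified Lean document; each statement's English description precedes it below -/
import Mathlib

section
/- Let G=(V,E) be an undirected graph and S = {0, 1, a0, a1, a2}. Define F : S^V → S^V by: F(c)(v) = 1-i if c(v) = i ∈ {0,1}; if c(v) = a_i then F(c)(v) = 0 when some neighbor of v has state in {0,1}, and F(c)(v) = a_{(i+1) mod 3} otherwise. Then G is connected if and only if F has no periodic orbit of minimal period 6, i.e., there is no configuration c with F^6(c) = c and F^j(c) ≠ c for all 1 ≤ j ≤ 5. -/
attribute [local instance] Classical.propDecidable

inductive St : Type where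
  | z0 | z1 | a0 | a1 | a2
  deriving DecidableEq

noncomputable def caF {V : Type*} (G : SimpleGraph V) (c : V → St) : V → St :=
  fun v =>
    match c v with
    | .z0 => .z1
    | .z1 => .z0
    | .a0 => if ∃ w, G.Adj v w ∧ (c w = .z0 ∨ c w = .z1) then .z0 else .a1
    | .a1 => if ∃ w, G.Adj v w ∧ (c w = .z0 ∨ c w = .z1) then .z0 else .a2
    | .a2 => if ∃ w, G.Adj v w ∧ (c w = .z0 ∨ c w = .z1) then .z0 else .a0

/-- auxiliary predicate: state is one of the two "z" states -/
def isZ (s : St) : Prop := s = .z0 ∨ s = .z1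

def anext : St → St
  | .z0 => .z0
  | .z1 => .z1
  | .a0 => .a1
  | .a1 => .a2
  | .a2 => .a0

def zst (k : ℕ) : St := if k % 2 = 0 then .z0 else .z1

def ast (k : ℕ) : St := if k % 3 = 0 then .a0 else if k % 3 = 1 then .a1 else .a2

lemma mono_isZ {V : Type*} (G : SimpleGraph V) (d : V → St) (v : V)
    (h : isZ (d v)) : isZ (caF G d v) := by
  rcases h with h | h <;> simp [caF, isZ, h]

lemma mono_isZ_iter {V : Type*} (G : SimpleGraph V) (d : V → St) (v : V) (k : ℕ)
    (h : isZ (d v)) : isZ ((caF G)^[k] d v) := by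
  induction k with
  | zero => exact h
  | succ k ih =>
    rw [Function.iterate_succ_apply']
    exact mono_isZ G _ v ih

lemma cross {V : Type*} {G : SimpleGraph V} (P : V → Prop) :
    ∀ {u v : V}, G.Walk u v → P u → ¬ P v → ∃ x y, G.Adj x y ∧ P x ∧ ¬ P y := by
  intro u v w
  induction w with
  | nil => intro h h'; exact absurd h h'
  | @cons a b cVert h p ih =>
    intro hu hv
    by_cases hb : P b
    · exact ih hb hv
    · exact ⟨a, b, h, hu, hb⟩

lemma key_all_a {V : Type*} (G : SimpleGraph V) (d : V → St)
    (hd : ∀ x, ¬ isZ (d x)) : caF G d = fun x => anext (d x) := by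
  funext x
  have hex : ¬ ∃ w, G.Adj x w ∧ (d w = .z0 ∨ d w = .z1) := by
    rintro ⟨w, -, hw⟩; exact hd w hw
  rcases hx : d x with _ | _ | _ | _ | _
  · exact absurd (Or.inl hx) (hd x)
  · exact absurd (Or.inr hx) (hd x)
  all_goals simp [caF, hx, anext, hex]

lemma anext_not_isZ (s : St) (hs : ¬ isZ s) : ¬ isZ (anext s) := by
  cases s <;> simp_all [anext, isZ]

lemma iterc {V : Type*} (G : SimpleGraph V) (u : V) (k : ℕ) :
    (caF G)^[k] (fun w => if G.Reachable u w then St.z0 else St.a0)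
      = fun w => if G.Reachable u w then zst k else ast k := by
  induction k with
  | zero => simp [zst, ast]
  | succ k ih =>
    rw [Function.iterate_succ_apply', ih]
    funext w
    by_cases hr : G.Reachable u w
    · rcases (show k % 2 = 0 ∨ k % 2 = 1 by omega) with h | h
      · have h' : (k + 1) % 2 = 1 := by omega
        simp [caF, zst, hr, h, h']
      · have h' : (k + 1) % 2 = 0 := by omega
        simp [caF, zst, hr, h, h']
    · have hex : ¬ ∃ x, G.Adj w x ∧
          ((if G.Reachable u x then zst k else ast k) = St.z0 ∨
           (if G.Reachable u x then zst k else ast k) = St.z1) := by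
        rintro ⟨x, hadj, hx⟩
        have hrx : ¬ G.Reachable u x := fun h => hr (h.trans hadj.symm.reachable)
        rw [if_neg hrx] at hx
        unfold ast at hx
        split_ifs at hx <;> simp_all
      rcases (show k % 3 = 0 ∨ k % 3 = 1 ∨ k % 3 = 2 by omega) with h | h | h
      · have h' : (k + 1) % 3 = 1 := by omega
        simp [caF, ast, hr, hex, h, h']
        intro x hadj
        have hrx : ¬ G.Reachable u x := fun hh => hr (hh.trans hadj.symm.reachable)
        simp [hrx]
      · have h' : (k + 1) % 3 = 2 := by omega
        simp [caF, ast, hr, hex, h, h']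
        intro x hadj
        have hrx : ¬ G.Reachable u x := fun hh => hr (hh.trans hadj.symm.reachable)
        simp [hrx]
      · have h' : (k + 1) % 3 = 0 := by omega
        simp [caF, ast, hr, hex, h, h']
        intro x hadj
        have hrx : ¬ G.Reachable u x := fun hh => hr (hh.trans hadj.symm.reachable)
        simp [hrx]

theorem stmt1 {V : Type*} [Nonempty V] (G : SimpleGraph V) :
    G.Connected ↔
      ¬ ∃ c : V → St, (caF G)^[6] c = c ∧ ∀ j, 1 ≤ j → j ≤ 5 → (caF G)^[j] c ≠ c := by
  constructor
  · rintro hcon ⟨c, h6, hj⟩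
    -- On the periodic orbit, no a-vertex is ever adjacent to a z-vertex at time 0.
    have keyA : ∀ v w, G.Adj v w → isZ (c w) → isZ (c v) := by
      intro v w hadj hcw
      by_contra hv
      have hz1 : isZ (caF G c v) := by
        have hex : ∃ x, G.Adj v x ∧ (c x = .z0 ∨ c x = .z1) := ⟨w, hadj, hcw⟩
        rcases hc : c v with _ | _ | _ | _ | _
        · exact absurd (Or.inl hc) hv
        · exact absurd (Or.inr hc) hv
        all_goals simp [caF, isZ, hc, hex]
      have h5 : isZ ((caF G)^[5] (caF G c) v) := mono_isZ_iter G _ v 5 hz1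
      rw [← Function.iterate_succ_apply] at h5
      rw [h6] at h5
      exact hv h5
    by_cases hz : ∀ v, isZ (c v)
    · -- all z: period 2
      have h2 : (caF G)^[2] c = c := by
        funext v
        rcases hz v with h | h
        · have h1 : caF G c v = .z1 := by simp [caF, h]
          show caF G (caF G c) v = c v
          simp [caF, h1, h]
        · have h1 : caF G c v = .z0 := by simp [caF, h]
          show caF G (caF G c) v = c v
          simp [caF, h1, h]
      exact hj 2 (by norm_num) (by norm_num) h2
    · by_cases ha : ∀ v, ¬ isZ (c v)
      · -- all a: period 3
        have e1 := key_all_a G c ha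
        have ha1 : ∀ x, ¬ isZ (caF G c x) := by
          intro x; rw [e1]; exact anext_not_isZ _ (ha x)
        have e2 := key_all_a G _ ha1
        have ha2 : ∀ x, ¬ isZ (caF G (caF G c) x) := by
          intro x; rw [e2]; exact anext_not_isZ _ (ha1 x)
        have e3 := key_all_a G _ ha2
        have h3 : (caF G)^[3] c = c := by
          funext v
          show caF G (caF G (caF G c)) v = c v
          rw [e3]; simp only; rw [e2]; simp only; rw [e1]; simp only
          rcases hx : c v with _ | _ | _ | _ | _
          · exact absurd (Or.inl hx) (ha v)
          · exact absurd (Or.inr hx) (ha v)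
          all_goals simp [anext]
        exact hj 3 (by norm_num) (by norm_num) h3
      · -- mixed: contradiction with connectivity
        push_neg at hz ha
        obtain ⟨v0, hv0⟩ := hz
        obtain ⟨u0, hu0⟩ := ha
        obtain ⟨p⟩ := hcon.preconnected u0 v0
        obtain ⟨x, y, hadj, hx, hy⟩ := cross (fun z => isZ (c z)) p hu0 hv0
        exact hy (keyA y x hadj.symm hx)
  · intro hno
    by_contra hnc
    have hpc : ¬ G.Preconnected := fun h => hnc ⟨h⟩
    obtain ⟨u, v, huv⟩ : ∃ u v, ¬ G.Reachable u v := by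
      by_contra h; push_neg at h; exact hpc h
    apply hno
    refine ⟨fun w => if G.Reachable u w then St.z0 else St.a0, ?_, ?_⟩
    · rw [iterc]
      funext w
      by_cases h : G.Reachable u w <;> simp [h, zst, ast]
    · intro j h1 h5 heq
      rw [iterc] at heq
      have hru : G.Reachable u u := SimpleGraph.Reachable.refl u
      interval_cases j
      · have h := congrFun heq u
        rw [if_pos hru, if_pos hru] at h
        simp [zst] at h
      · have h := congrFun heq v
        rw [if_neg huv, if_neg huv] at h
        simp [ast] at h
      · have h := congrFun heq u
        rw [if_pos hru, if_pos hru] at h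
        simp [zst] at h
      · have h := congrFun heq v
        rw [if_neg huv, if_neg huv] at h
        simp [ast] at h
      · have h := congrFun heq u
        rw [if_pos hru, if_pos hru] at h
        simp [zst] at h
end

section
/- With F as in the connectivity automaton (states S = {0,1,a0,a1,a2}, F(c)(v) = 1-i for c(v)=i∈{0,1}; F(c)(v)=0 if c(v)=a_i and v has a neighbor with state in {0,1}; F(c)(v)=a_{(i+1) mod 3} otherwise): if G is disconnected (has at least two connected components, each nonempty), then the configuration c equal to a0 on one fixed component and 0 on all other vertices satisfies F^6(c) = c and F^j(c) ≠ c for 1 ≤ j ≤ 5. -/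
attribute [local instance] Classical.propDecidable

noncomputable def cfg {V : Type*} (G : SimpleGraph V) (v0 : V) (k : ℕ) : V → St :=
  fun v =>
    if G.Reachable v0 v then
      (if k % 3 = 0 then St.a0 else if k % 3 = 1 then St.a1 else St.a2)
    else (if k % 2 = 0 then St.z0 else St.z1)

lemma cfg_step {V : Type*} (G : SimpleGraph V) (v0 : V) (k : ℕ) :
    caF G (cfg G v0 k) = cfg G v0 (k + 1) := by
  funext v
  by_cases hv : G.Reachable v0 v
  · have hnb : ¬ ∃ w, G.Adj v w ∧ (cfg G v0 k w = .z0 ∨ cfg G v0 k w = .z1) := by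
      rintro ⟨w, hadj, hw⟩
      have hrw : G.Reachable v0 w := hv.trans hadj.reachable
      simp only [cfg, if_pos hrw] at hw
      rcases hw with h | h <;> split_ifs at h <;> exact St.noConfusion h
    have h3 : k % 3 = 0 ∨ k % 3 = 1 ∨ k % 3 = 2 := by omega
    have hk1 : (k + 1) % 3 = (k % 3 + 1) % 3 := by omega
    rcases h3 with h | h | h <;>
      · simp [caF, cfg, if_pos hv, hnb, hk1, h]
        intro x hx
        simp [hv.trans hx.reachable]
  · simp only [cfg, if_neg hv]
    rcases Nat.even_or_odd k with h | h
    · have h2 : k % 2 = 0 := Nat.even_iff.mp h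
      have h3 : (k + 1) % 2 = 1 := by omega
      simp [caF, cfg, if_neg hv, h2, h3]
    · have h2 : k % 2 = 1 := Nat.odd_iff.mp h
      have h3 : (k + 1) % 2 = 0 := by omega
      simp [caF, cfg, if_neg hv, h2, h3]

lemma cfg_iter {V : Type*} (G : SimpleGraph V) (v0 : V) (k : ℕ) :
    (caF G)^[k] (cfg G v0 0) = cfg G v0 k := by
  induction k with
  | zero => rfl
  | succ n ih => rw [Function.iterate_succ_apply', ih, cfg_step]

theorem stmt2 {V : Type*} (G : SimpleGraph V) (v0 : V)
    (hdis : ∃ u, ¬ G.Reachable v0 u)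
    (c : V → St)
    (hc : ∀ v, c v = if G.Reachable v0 v then St.a0 else St.z0) :
    (caF G)^[6] c = c ∧ ∀ j, 1 ≤ j → j ≤ 5 → (caF G)^[j] c ≠ c := by
  obtain ⟨u, hu⟩ := hdis
  have hc0 : c = cfg G v0 0 := by
    funext v; rw [hc v]; simp [cfg]
  subst hc0
  constructor
  · rw [cfg_iter]
    funext v; simp [cfg]
  · intro j h1 h5 heq
    rw [cfg_iter] at heq
    have hu' := congrFun heq u
    have hv' := congrFun heq v0
    have hr : G.Reachable v0 v0 := SimpleGraph.Reachable.refl v0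
    simp only [cfg, if_neg hu, if_pos hr] at hu' hv'
    interval_cases j <;> simp_all
end

section
/- Fix a finite set S, s_0 ∈ S, and a domino specification D over S for the labeled graph structure. Extend the alphabet to S' = S ∪ {t, e_0, e_1} (new symbols) and define f' by: states e_i map to e_{1-i}; state t maps to s_0; a state s ∈ S maps to itself if all its δ-neighbors s' satisfy (ρ(s), ρ(s')) ∈ D_δ (where ρ sends t to s_0 and fixes S, and the condition for vertices in state t uses ρ similarly), and to e_0 otherwise. Then: (1) the fixed points of F_{G,f'} are exactly the D-valid configurations over S; and (2) a fixed point c has a preimage c' ≠ c under F_{G,f'} if and only if c contains an occurrence of s_0, and any such preimage c' differs from c exactly on a nonempty set of vertices where c is s_0 and c' is t. -/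
attribute [local instance] Classical.propDecidable

/-- The alphabet `S` extended by a duplicate marker `t` and two error states. -/
inductive CAExt (S : Type*) : Type _ where
  | base : S → CAExt S
  | t : CAExt S
  | e0 : CAExt S
  | e1 : CAExt S

/-- The projection `ρ` sending `t` to `s0` and fixing `S` (its value on error
states is irrelevant). -/
def rho {S : Type*} (s0 : S) : CAExt S → S
  | .base s => s
  | _ => s0

def isErr {S : Type*} (x : CAExt S) : Prop := x = CAExt.e0 ∨ x = CAExt.e1

theorem stmt12 {V D S : Type*} (E : D → V → V → Prop)
    (Dom : D → S → S → Prop) (s0 : S)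
    (F : (V → CAExt S) → V → CAExt S)
    (hF : ∀ (c : V → CAExt S) (v : V),
      F c v =
        match c v with
        | .e0 => .e1
        | .e1 => .e0
        | s =>
          if ∀ δ v', E δ v v' → ¬ isErr (c v') ∧ Dom δ (rho s0 s) (rho s0 (c v'))
          then (if s = CAExt.t then CAExt.base s0 else s)
          else CAExt.e0) :
    -- (1) fixed points are exactly the D-valid configurations over S
    (∀ c : V → CAExt S, F c = c ↔
      ∃ d : V → S, (∀ v, c v = CAExt.base (d v)) ∧
        ∀ (δ : D) (v v' : V), E δ v v' → Dom δ (d v) (d v')) ∧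
    -- (2) a fixed point has a preimage other than itself iff it contains s0,
    -- and any such preimage differs from it exactly on a nonempty set of
    -- vertices where the fixed point is s0 and the preimage is t
    (∀ (c : V → CAExt S) (d : V → S), (∀ v, c v = CAExt.base (d v)) →
      (∀ (δ : D) (v v' : V), E δ v v' → Dom δ (d v) (d v')) →
      ((∃ c', c' ≠ c ∧ F c' = c) ↔ ∃ v, d v = s0) ∧
      (∀ c', F c' = c → c' ≠ c →
        {v | c' v ≠ c v}.Nonempty ∧
        ∀ v, c' v ≠ c v → c v = CAExt.base s0 ∧ c' v = CAExt.t)) := by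
  -- helper lemmas computing F in each case
  have key_b : ∀ (c : V → CAExt S) (v : V) (s : S), c v = CAExt.base s →
      F c v = if (∀ δ v', E δ v v' → ¬ isErr (c v') ∧ Dom δ s (rho s0 (c v')))
        then CAExt.base s else CAExt.e0 := by
    intro c v s h
    rw [hF, h]
    simp [rho]; congr
  have key_t : ∀ (c : V → CAExt S) (v : V), c v = CAExt.t →
      F c v = if (∀ δ v', E δ v v' → ¬ isErr (c v') ∧ Dom δ s0 (rho s0 (c v')))
        then CAExt.base s0 else CAExt.e0 := by
    intro c v h
    rw [hF, h]
    simp [rho]; congr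
  have key_e0 : ∀ (c : V → CAExt S) (v : V), c v = CAExt.e0 → F c v = CAExt.e1 := by
    intro c v h; rw [hF, h]
  have key_e1 : ∀ (c : V → CAExt S) (v : V), c v = CAExt.e1 → F c v = CAExt.e0 := by
    intro c v h; rw [hF, h]
  -- the "diff" lemma
  have diff : ∀ (c : V → CAExt S) (d : V → S), (∀ v, c v = CAExt.base (d v)) →
      ∀ c', F c' = c → ∀ v, c' v ≠ c v →
        c v = CAExt.base s0 ∧ c' v = CAExt.t := by
    intro c d hc c' hpre v hne
    have hv : F c' v = CAExt.base (d v) := by rw [hpre]; exact hc v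
    cases h : c' v with
    | base s =>
      rw [key_b c' v s h] at hv
      split at hv
      · exact absurd (by rw [h, hv, hc v]) hne
      · exact absurd hv (by simp)
    | t =>
      rw [key_t c' v h] at hv
      split at hv
      · exact ⟨by rw [hc v, ← hv], rfl⟩
      · exact absurd hv (by simp)
    | e0 => rw [key_e0 c' v h] at hv; exact absurd hv (by simp)
    | e1 => rw [key_e1 c' v h] at hv; exact absurd hv (by simp)
  constructor
  · -- part (1)
    intro c
    constructor
    · intro hfix
      have hb : ∀ v, c v = CAExt.base (rho s0 (c v)) := by
        intro v
        have hv : F c v = c v := congrFun hfix v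
        cases h : c v with
        | base s => rfl
        | t =>
          rw [key_t c v h, h] at hv
          split at hv
          · exact absurd hv (by simp)
          · exact absurd hv (by simp)
        | e0 => rw [key_e0 c v h, h] at hv; exact absurd hv (by simp)
        | e1 => rw [key_e1 c v h, h] at hv; exact absurd hv (by simp)
      refine ⟨fun v => rho s0 (c v), hb, ?_⟩
      intro δ v v' hE
      have hv : F c v = c v := congrFun hfix v
      rw [key_b c v (rho s0 (c v)) (hb v)] at hv
      split at hv
      · rename_i hcond
        have h2 := (hcond δ v' hE).2
        rwa [hb v'] at h2
      · rw [hb v] at hv; exact absurd hv (by simp)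
    · rintro ⟨d, hc, hdom⟩
      funext v
      have hcond : ∀ δ v', E δ v v' → ¬ isErr (c v') ∧ Dom δ (d v) (rho s0 (c v')) := by
        intro δ v' hE
        rw [hc v']
        exact ⟨by simp [isErr], hdom δ v v' hE⟩
      rw [key_b c v (d v) (hc v), if_pos hcond, hc v]
  · -- part (2)
    intro c d hc hdom
    constructor
    · constructor
      · rintro ⟨c', hne, hpre⟩
        obtain ⟨v, hv⟩ := Function.ne_iff.mp hne
        obtain ⟨h1, _⟩ := diff c d hc c' hpre v hv
        rw [hc v] at h1
        exact ⟨v, CAExt.base.inj h1⟩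
      · rintro ⟨v0, hv0⟩
        set c' : V → CAExt S := fun v => if d v = s0 then CAExt.t else c v with hc'
        have hrho : ∀ v, rho s0 (c' v) = d v := by
          intro v
          by_cases h : d v = s0
          · simp [hc', h, rho]
          · simp [hc', h, hc v, rho]
        have herr : ∀ v, ¬ isErr (c' v) := by
          intro v
          by_cases h : d v = s0
          · simp [hc', h, isErr]
          · simp [hc', h, hc v, isErr]
        have hcond : ∀ v, ∀ δ v', E δ v v' →
            ¬ isErr (c' v') ∧ Dom δ (d v) (rho s0 (c' v')) := by
          intro v δ v' hE
          rw [hrho v']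
          exact ⟨herr v', hdom δ v v' hE⟩
        refine ⟨c', ?_, ?_⟩
        · intro h
          have h2 := congrFun h v0
          rw [hc v0] at h2
          simp [hc', hv0] at h2
        · funext v
          by_cases h : d v = s0
          · have ht : c' v = CAExt.t := by simp [hc', h]
            have hc2 := hcond v
            rw [h] at hc2
            rw [key_t c' v ht, if_pos hc2, hc v, h]
          · have hb : c' v = CAExt.base (d v) := by simp [hc', h, hc v]
            rw [key_b c' v (d v) hb, if_pos (hcond v), hc v]
    · intro c' hpre hne
      exact ⟨Function.ne_iff.mp hne, fun v hv => diff c d hc c' hpre v hv⟩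
end

section
/- Let G be a connected, locally finite infinite graph and X an infinite set of vertices of G. Then there exists an infinite walk v_0, v_1, v_2, … in G that visits every vertex of G at most 2 times and visits infinitely many distinct elements of X. -/
namespace Stmt16Aux

variable {V : Type*} (G : SimpleGraph V) (r : V)

open Classical in
/-- parent function toward the root `r`. -/
noncomputable def par (v : V) : V :=
  if h : ∃ u, G.Adj u v ∧ G.dist r u + 1 = G.dist r v then h.choose else v

lemma par_spec (hconn : G.Connected) {v : V} (hv : v ≠ r) :
    G.Adj (par G r v) v ∧ G.dist r (par G r v) + 1 = G.dist r v := by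
  have hd0 : G.dist r v ≠ 0 := fun h => hv (hconn.dist_eq_zero_iff.mp h).symm
  have hex : ∃ u, G.Adj u v ∧ G.dist r u + 1 = G.dist r v := by
    obtain ⟨p, hp⟩ := hconn.exists_walk_length_eq_dist r v
    obtain ⟨u, hadj, q', hq⟩ : ∃ u, ∃ h : G.Adj v u, ∃ q' : G.Walk u r,
        p.reverse = SimpleGraph.Walk.cons h q' := by
      cases h' : p.reverse with
      | nil => exact absurd rfl hv
      | cons h q => exact ⟨_, h, q, rfl⟩
    have hlen : q'.length + 1 = G.dist r v := by
      have := congrArg SimpleGraph.Walk.length hq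
      simpa [hp] using this.symm
    have h1 : G.dist r u ≤ q'.length := by
      simpa using G.dist_le q'.reverse
    have h2 : G.dist r v ≤ G.dist r u + 1 := by
      have := hconn.dist_triangle (u := r) (v := u) (w := v)
      have h3 : G.dist u v ≤ 1 := by simpa using G.dist_le hadj.symm.toWalk
      omega
    exact ⟨u, hadj.symm, by omega⟩
  rw [par, dif_pos hex]
  exact hex.choose_spec

/-- iterated parent -/
noncomputable def anc (v : V) (k : ℕ) : V := (par G r)^[k] v

@[simp] lemma anc_zero (v : V) : anc G r v 0 = v := rfl

lemma anc_succ' (v : V) (k : ℕ) : anc G r v (k + 1) = par G r (anc G r v k) :=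
  Function.iterate_succ_apply' _ _ _

lemma anc_anc (v : V) (a b : ℕ) : anc G r (anc G r v a) b = anc G r v (b + a) :=
  (Function.iterate_add_apply _ b a v).symm

lemma dist_anc (hconn : G.Connected) : ∀ {k : ℕ} {v : V}, k ≤ G.dist r v →
    G.dist r (anc G r v k) + k = G.dist r v := by
  intro k
  induction k with
  | zero => intro v _; simp
  | succ k ih =>
    intro v hk
    have h1 := ih (v := v) (by omega)
    have hne : anc G r v k ≠ r := by
      intro h
      rw [h] at h1
      simp [SimpleGraph.dist_self] at h1
      omega
    have := (par_spec G r hconn hne).2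
    rw [anc_succ']
    omega

/-- `u` is an ancestor of `w` (w in subtree of u) -/
def inT (u w : V) : Prop :=
  G.dist r u ≤ G.dist r w ∧ anc G r w (G.dist r w - G.dist r u) = u

lemma inT_of_anc (hconn : G.Connected) {w : V} {k : ℕ} (hk : k ≤ G.dist r w) {u : V}
    (h : anc G r w k = u) : inT G r u w := by
  have hd := dist_anc G r hconn hk (v := w)
  rw [h] at hd
  refine ⟨by omega, ?_⟩
  have : G.dist r w - G.dist r u = k := by omega
  rw [this, h]

lemma inT_refl (u : V) : inT G r u u := ⟨le_refl _, by simp⟩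

lemma inT_trans (hconn : G.Connected) {u w z : V} (h1 : inT G r u w) (h2 : inT G r w z) :
    inT G r u z := by
  obtain ⟨hd1, he1⟩ := h1
  obtain ⟨hd2, he2⟩ := h2
  have : anc G r z ((G.dist r w - G.dist r u) + (G.dist r z - G.dist r w)) = u := by
    rw [← anc_anc, he2, he1]
  exact inT_of_anc G r hconn (by omega) this

lemma inT_unique {u u' w : V} (h : inT G r u w) (h' : inT G r u' w)
    (hd : G.dist r u = G.dist r u') : u = u' := by
  rw [← h.2, ← h'.2, hd]

lemma inT_root (hconn : G.Connected) (w : V) : inT G r r w := by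
  refine inT_of_anc G r hconn (k := G.dist r w) (le_refl _) ?_
  have := dist_anc G r hconn (k := G.dist r w) (v := w) (le_refl _)
  have h0 : G.dist r (anc G r w (G.dist r w)) = 0 := by omega
  exact (hconn.dist_eq_zero_iff.mp h0).symm

/-- children of `u` in the tree -/
def kids (u : V) : Set V := {c | par G r c = u ∧ G.dist r c = G.dist r u + 1}

lemma kids_finite (hconn : G.Connected) (hlf : ∀ v : V, Set.Finite {u | G.Adj v u}) (u : V) :
    (kids G r u).Finite := by
  apply (hlf u).subset
  rintro c ⟨hpar, hd⟩
  have hne : c ≠ r := by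
    intro h; rw [h] at hd; simp [SimpleGraph.dist_self] at hd
  have := (par_spec G r hconn hne).1
  rw [hpar] at this
  exact this

lemma inT_kid (hconn : G.Connected) {c u : V} (hc : c ∈ kids G r u) : inT G r u c := by
  refine inT_of_anc G r hconn (k := 1) (by have := hc.2; omega) ?_
  rw [show (1 : ℕ) = 0 + 1 from rfl, anc_succ']
  simpa using hc.1

lemma exists_kid (hconn : G.Connected) {u w : V} (h : inT G r u w) (hne : w ≠ u) :
    ∃ c ∈ kids G r u, inT G r c w := by
  obtain ⟨hd, he⟩ := h
  have hlt : G.dist r u < G.dist r w := by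
    rcases lt_or_eq_of_le hd with h' | h'
    · exact h'
    · exfalso; apply hne; rw [← he, h']; simp
  refine ⟨anc G r w (G.dist r w - G.dist r u - 1), ⟨?_, ?_⟩, ?_⟩
  · rw [← anc_succ']
    have : G.dist r w - G.dist r u - 1 + 1 = G.dist r w - G.dist r u := by omega
    rw [this, he]
  · have := dist_anc G r hconn (k := G.dist r w - G.dist r u - 1) (v := w) (by omega)
    omega
  · exact inT_of_anc G r hconn (by omega) rfl

lemma infinite_inter_of_forall_mem {α β : Type*} {S : Set α} (hS : S.Infinite) {C : Set β}
    (hC : C.Finite) {g : β → Set α} (hsub : ∀ a ∈ S, ∃ c ∈ C, a ∈ g c) :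
    ∃ c ∈ C, (S ∩ g c).Infinite := by
  by_contra h
  push_neg at h
  have hsub2 : S ⊆ ⋃ c ∈ C, S ∩ g c := by
    intro a ha
    obtain ⟨c, hc, hg⟩ := hsub a ha
    exact Set.mem_biUnion hc ⟨ha, hg⟩
  exact hS ((hC.biUnion fun c hc => h c hc).subset hsub2)


structure SD (V : Type*) where
  K : ℕ
  j : ℕ
  x : V
  nxt : V

lemma step (hconn : G.Connected) (hlf : ∀ v : V, Set.Finite {u | G.Adj v u}) (X : Set V)
    {v : V} (hv : (X ∩ {w | inT G r v w}).Infinite) :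
    ∃ d : SD V, d.x ∈ X ∧ anc G r d.x d.K = v ∧ G.dist r v + d.K = G.dist r d.x ∧
      1 ≤ d.K ∧ d.j ≤ d.K ∧
      (X ∩ {w | inT G r d.nxt w}).Infinite ∧
      par G r d.nxt = anc G r d.x d.j ∧
      G.dist r d.nxt = G.dist r (anc G r d.x d.j) + 1 ∧
      (∀ i ≤ d.K, ¬ inT G r d.nxt (anc G r d.x i)) ∧
      inT G r v d.nxt := by
  classical
  obtain ⟨x, hxmem, hxne⟩ := (hv.diff (Set.finite_singleton v)).nonempty
  have hxX : x ∈ X := hxmem.1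
  have hxT : inT G r v x := hxmem.2
  have hxne' : x ≠ v := by simpa using hxne
  have hdvx : G.dist r v < G.dist r x := by
    rcases lt_or_eq_of_le hxT.1 with h | h
    · exact h
    · exfalso; apply hxne'; rw [← hxT.2, h]; simp
  set K := G.dist r x - G.dist r v with hK
  have hancK : anc G r x K = v := hxT.2
  have hKdx : K ≤ G.dist r x := by omega
  have hPK : (X ∩ {w | inT G r (anc G r x K) w}).Infinite := by rw [hancK]; exact hv
  have hex : ∃ i, (X ∩ {w | inT G r (anc G r x i) w}).Infinite := ⟨K, hPK⟩
  set j := Nat.find hex with hj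
  have hPj : (X ∩ {w | inT G r (anc G r x j) w}).Infinite := Nat.find_spec hex
  have hjK : j ≤ K := Nat.find_min' hex hPK
  have hjmin : ∀ m, m < j → ¬ (X ∩ {w | inT G r (anc G r x m) w}).Infinite :=
    fun m hm => Nat.find_min hex hm
  set u := anc G r x j with hu
  have hdu : G.dist r u + j = G.dist r x := dist_anc G r hconn (by omega)
  have hBfin : j ≠ 0 → (X ∩ {w | inT G r (anc G r x (j-1)) w}).Finite := by
    intro h0
    exact Set.not_infinite.mp (hjmin (j-1) (by omega))
  set B : Set V := if j = 0 then ∅ else {w | inT G r (anc G r x (j-1)) w} with hB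
  set B' : Set V := if j = 0 then ∅ else {anc G r x (j-1)} with hB'
  set S : Set V := (X ∩ {w | inT G r u w}) \ ({u} ∪ B) with hS
  have hSinf : S.Infinite := by
    have h1 : ((X ∩ {w | inT G r u w}) \ ({u} ∪ (X ∩ B))).Infinite := by
      apply Set.Infinite.diff hPj
      apply Set.Finite.union (Set.finite_singleton u)
      by_cases h0 : j = 0
      · simp [hB, h0]
      · rw [hB, if_neg h0]; exact hBfin h0
    apply h1.mono
    rintro a ⟨ha1, ha2⟩
    refine ⟨ha1, fun hmem => ha2 ?_⟩
    rcases hmem with h | h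
    · exact Or.inl h
    · exact Or.inr ⟨ha1.1, h⟩
  have hsub : ∀ a ∈ S, ∃ c ∈ kids G r u \ B', a ∈ {w | inT G r c w} := by
    rintro a ⟨⟨haX, haT⟩, hnot⟩
    have hane : a ≠ u := fun h => hnot (Or.inl (by simp [h]))
    obtain ⟨c, hc, hca⟩ := exists_kid G r hconn haT hane
    refine ⟨c, ⟨hc, ?_⟩, hca⟩
    intro hcB'
    by_cases h0 : j = 0
    · rw [hB', if_pos h0] at hcB'; exact hcB'
    · rw [hB', if_neg h0] at hcB'
      have hceq : c = anc G r x (j-1) := hcB'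
      apply hnot
      apply Set.mem_union_right
      rw [hB, if_neg h0]
      show inT G r (anc G r x (j-1)) a
      rw [← hceq]
      exact hca
  have hkfin : (kids G r u \ B').Finite := (kids_finite G r hconn hlf u).diff
  obtain ⟨c, hcmem, hcinf⟩ := infinite_inter_of_forall_mem hSinf hkfin hsub
  have hckid : c ∈ kids G r u := hcmem.1
  have hsum : G.dist r v + K = G.dist r x := by omega
  have hKpos : 1 ≤ K := by omega
  refine ⟨⟨K, j, x, c⟩, hxX, hancK, hsum, hKpos, hjK, ?_, ?_, ?_, ?_, ?_⟩
  · apply hcinf.mono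
    rintro a ⟨⟨⟨haX, _⟩, _⟩, haT⟩
    exact ⟨haX, haT⟩
  · exact hckid.1
  · exact hckid.2
  · intro i hi hinT
    have hdc : G.dist r c = G.dist r u + 1 := hckid.2
    have hdwi : G.dist r (anc G r x i) + i = G.dist r x :=
      dist_anc G r hconn (le_trans hi hKdx)
    have h1 : G.dist r c ≤ G.dist r (anc G r x i) := hinT.1
    have hij : i + 1 ≤ j := by omega
    have hb : inT G r (anc G r x (j-1)) (anc G r x i) := by
      apply inT_of_anc G r hconn (k := j - 1 - i) (by omega)
      rw [anc_anc]
      congr 1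
      omega
    have hbd : G.dist r (anc G r x (j-1)) + (j-1) = G.dist r x :=
      dist_anc G r hconn (by omega)
    have hceq : c = anc G r x (j-1) := inT_unique G r hinT hb (by omega)
    have h0 : j ≠ 0 := by omega
    apply hcmem.2
    rw [hB', if_neg h0]
    exact hceq
  · have h1 : inT G r v u := by
      apply inT_of_anc G r hconn (k := K - j) (by omega)
      rw [hu, anc_anc]
      have hkj : K - j + j = K := by omega
      rw [hkj, hancK]
    exact inT_trans G r hconn h1 (inT_kid G r hconn hckid)


end Stmt16Aux

namespace Stmt16Aux

structure Setup (V : Type*) where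
  G : SimpleGraph V
  r : V
  hconn : G.Connected
  hlf : ∀ v : V, Set.Finite {u | G.Adj v u}
  X : Set V
  hX : X.Infinite

variable {V : Type*} (s : Setup V)

open Classical in
noncomputable def Setup.nx (v : V) : SD V :=
  if h : (s.X ∩ {w | inT s.G s.r v w}).Infinite then (step s.G s.r s.hconn s.hlf s.X h).choose
  else ⟨1, 0, v, v⟩

lemma Setup.nx_spec {v : V} (h : (s.X ∩ {w | inT s.G s.r v w}).Infinite) :
    (s.nx v).x ∈ s.X ∧ anc s.G s.r (s.nx v).x (s.nx v).K = v ∧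
      s.G.dist s.r v + (s.nx v).K = s.G.dist s.r (s.nx v).x ∧
      1 ≤ (s.nx v).K ∧ (s.nx v).j ≤ (s.nx v).K ∧
      (s.X ∩ {w | inT s.G s.r (s.nx v).nxt w}).Infinite ∧
      par s.G s.r (s.nx v).nxt = anc s.G s.r (s.nx v).x (s.nx v).j ∧
      s.G.dist s.r (s.nx v).nxt = s.G.dist s.r (anc s.G s.r (s.nx v).x (s.nx v).j) + 1 ∧
      (∀ i ≤ (s.nx v).K, ¬ inT s.G s.r (s.nx v).nxt (anc s.G s.r (s.nx v).x i)) ∧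
      inT s.G s.r v (s.nx v).nxt := by
  have : s.nx v = (step s.G s.r s.hconn s.hlf s.X h).choose := by
    rw [Setup.nx, dif_pos h]
  rw [this]
  exact (step s.G s.r s.hconn s.hlf s.X h).choose_spec

noncomputable def Setup.vtx : ℕ → V := fun n => Nat.rec s.r (fun _ v => (s.nx v).nxt) n

lemma Setup.vtx_succ (n : ℕ) : s.vtx (n + 1) = (s.nx (s.vtx n)).nxt := rfl

lemma Setup.vtx_good : ∀ n, (s.X ∩ {w | inT s.G s.r (s.vtx n) w}).Infinite := by
  intro n
  induction n with
  | zero => exact s.hX.mono fun a ha => ⟨ha, inT_root s.G s.r s.hconn a⟩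
  | succ n ih =>
    rw [Setup.vtx_succ]
    exact (s.nx_spec ih).2.2.2.2.2.1

noncomputable def Setup.Kn (n : ℕ) : ℕ := (s.nx (s.vtx n)).K
noncomputable def Setup.jn (n : ℕ) : ℕ := (s.nx (s.vtx n)).j
noncomputable def Setup.xn (n : ℕ) : V := (s.nx (s.vtx n)).x
noncomputable def Setup.wn (n i : ℕ) : V := anc s.G s.r (s.xn n) i

lemma Setup.spec (n : ℕ) :
    s.xn n ∈ s.X ∧ s.wn n (s.Kn n) = s.vtx n ∧
      s.G.dist s.r (s.vtx n) + s.Kn n = s.G.dist s.r (s.xn n) ∧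
      1 ≤ s.Kn n ∧ s.jn n ≤ s.Kn n ∧
      (s.X ∩ {w | inT s.G s.r (s.vtx (n+1)) w}).Infinite ∧
      par s.G s.r (s.vtx (n+1)) = s.wn n (s.jn n) ∧
      s.G.dist s.r (s.vtx (n+1)) = s.G.dist s.r (s.wn n (s.jn n)) + 1 ∧
      (∀ i ≤ s.Kn n, ¬ inT s.G s.r (s.vtx (n+1)) (s.wn n i)) ∧
      inT s.G s.r (s.vtx n) (s.vtx (n+1)) := by
  have h := s.nx_spec (s.vtx_good n)
  rw [← Setup.vtx_succ]  at h
  exact h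

lemma Setup.hxX (n : ℕ) : s.xn n ∈ s.X := (s.spec n).1
lemma Setup.hancK (n : ℕ) : s.wn n (s.Kn n) = s.vtx n := (s.spec n).2.1
lemma Setup.hsum (n : ℕ) : s.G.dist s.r (s.vtx n) + s.Kn n = s.G.dist s.r (s.xn n) :=
  (s.spec n).2.2.1
lemma Setup.hK1 (n : ℕ) : 1 ≤ s.Kn n := (s.spec n).2.2.2.1
lemma Setup.hjK (n : ℕ) : s.jn n ≤ s.Kn n := (s.spec n).2.2.2.2.1
lemma Setup.hpar (n : ℕ) : par s.G s.r (s.vtx (n+1)) = s.wn n (s.jn n) :=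
  (s.spec n).2.2.2.2.2.2.1
lemma Setup.hdnxt (n : ℕ) :
    s.G.dist s.r (s.vtx (n+1)) = s.G.dist s.r (s.wn n (s.jn n)) + 1 :=
  (s.spec n).2.2.2.2.2.2.2.1
lemma Setup.havoid (n : ℕ) : ∀ i ≤ s.Kn n, ¬ inT s.G s.r (s.vtx (n+1)) (s.wn n i) :=
  (s.spec n).2.2.2.2.2.2.2.2.1
lemma Setup.hVnxt (n : ℕ) : inT s.G s.r (s.vtx n) (s.vtx (n+1)) :=
  (s.spec n).2.2.2.2.2.2.2.2.2

lemma Setup.hdw (n : ℕ) {i : ℕ} (hi : i ≤ s.Kn n) :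
    s.G.dist s.r (s.wn n i) + i = s.G.dist s.r (s.xn n) := by
  apply dist_anc s.G s.r s.hconn
  have := s.hsum n
  omega

lemma Setup.hwinj (n : ℕ) {i i' : ℕ} (hi : i ≤ s.Kn n) (hi' : i' ≤ s.Kn n)
    (heq : s.wn n i = s.wn n i') : i = i' := by
  have h1 := s.hdw n hi
  have h2 := s.hdw n hi'
  rw [heq] at h1
  omega

lemma Setup.hwr (n : ℕ) {i : ℕ} (hi : i < s.Kn n) : s.wn n i ≠ s.r := by
  intro h
  have h1 := s.hdw n (le_of_lt hi)
  rw [h] at h1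
  have h2 := s.hsum n
  rw [SimpleGraph.dist_self] at h1
  omega

lemma Setup.hadjw (n : ℕ) {i : ℕ} (hi : i < s.Kn n) : s.G.Adj (s.wn n (i+1)) (s.wn n i) := by
  have hne := s.hwr n hi
  have h := (par_spec s.G s.r s.hconn hne).1
  rw [show s.wn n (i+1) = par s.G s.r (s.wn n i) from anc_succ' s.G s.r (s.xn n) i]
  exact h

lemma Setup.hTn (n : ℕ) {i : ℕ} (hi : i ≤ s.Kn n) : inT s.G s.r (s.vtx n) (s.wn n i) := by
  apply inT_of_anc s.G s.r s.hconn (k := s.Kn n - i)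
  · have h1 := s.hdw n hi
    have h2 := s.hsum n
    omega
  · show anc s.G s.r (anc s.G s.r (s.xn n) i) (s.Kn n - i) = s.vtx n
    rw [anc_anc]
    have h3 : s.Kn n - i + i = s.Kn n := by omega
    rw [h3]
    exact s.hancK n

lemma Setup.hchain {m n : ℕ} (h : m ≤ n) : inT s.G s.r (s.vtx m) (s.vtx n) := by
  induction h with
  | refl => exact inT_refl s.G s.r _
  | step h ih => exact inT_trans s.G s.r s.hconn ih (s.hVnxt _)

lemma Setup.hdisj {m n i i' : ℕ} (hmn : m < n) (hi : i ≤ s.Kn m) (hi' : i' ≤ s.Kn n) :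
    s.wn m i ≠ s.wn n i' := by
  intro heq
  have h1 : inT s.G s.r (s.vtx (m+1)) (s.wn n i') :=
    inT_trans s.G s.r s.hconn (s.hchain hmn) (s.hTn n hi')
  rw [← heq] at h1
  exact s.havoid m i hi h1

noncomputable def Setup.fn (n t : ℕ) : V :=
  if t ≤ s.Kn n then s.wn n (s.Kn n - t) else s.wn n (t - s.Kn n)

noncomputable def Setup.len (n : ℕ) : ℕ := s.Kn n + s.jn n + 1

noncomputable def Setup.off : ℕ → ℕ := fun n => Nat.rec 0 (fun k ih => ih + s.len k) n

lemma Setup.off_zero : s.off 0 = 0 := rfl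
lemma Setup.off_succ (n : ℕ) : s.off (n + 1) = s.off n + s.len n := rfl

lemma Setup.off_lt (n : ℕ) : s.off n < s.off (n + 1) := by
  rw [Setup.off_succ, Setup.len]
  omega

lemma Setup.off_mono {a b : ℕ} (h : a ≤ b) : s.off a ≤ s.off b := by
  induction h with
  | refl => exact le_refl _
  | step h ih => exact le_trans ih (le_of_lt (s.off_lt _))

lemma Setup.off_ge (n : ℕ) : n ≤ s.off n := by
  induction n with
  | zero => exact Nat.zero_le _
  | succ n ih => have := s.off_lt n; omega

open Classical in
noncomputable def Setup.segf (i : ℕ) : ℕ := Nat.findGreatest (fun n => s.off n ≤ i) i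

lemma Setup.segf_le (i : ℕ) : s.off (s.segf i) ≤ i := by
  have h := Nat.findGreatest_spec (P := fun n => s.off n ≤ i) (m := 0) (n := i)
    (Nat.zero_le i) (by show s.off 0 ≤ i; rw [s.off_zero]; exact Nat.zero_le i)
  exact h

lemma Setup.segf_lt (i : ℕ) : i < s.off (s.segf i + 1) := by
  by_contra h
  push_neg at h
  have h2 : s.segf i + 1 ≤ i := le_trans (s.off_ge _) h
  have h3 := Nat.le_findGreatest (P := fun n => s.off n ≤ i) (m := s.segf i + 1) (n := i) h2 h
  have h4 : Nat.findGreatest (fun n => s.off n ≤ i) i = s.segf i := rfl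
  omega

lemma Setup.segf_eq {i n : ℕ} (h1 : s.off n ≤ i) (h2 : i < s.off (n + 1)) : s.segf i = n := by
  rcases lt_trichotomy (s.segf i) n with h | h | h
  · have ha := s.off_mono (show s.segf i + 1 ≤ n from by omega)
    have hb := s.segf_lt i
    omega
  · exact h
  · have ha := s.off_mono (show n + 1 ≤ s.segf i from by omega)
    have hb := s.segf_le i
    omega

noncomputable def Setup.wk (i : ℕ) : V := s.fn (s.segf i) (i - s.off (s.segf i))

lemma Setup.wk_eq (n t : ℕ) (ht : t ≤ s.Kn n + s.jn n) : s.wk (s.off n + t) = s.fn n t := by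
  have h1 : s.segf (s.off n + t) = n := by
    apply s.segf_eq (by omega)
    rw [s.off_succ, Setup.len]
    omega
  rw [Setup.wk, h1]
  congr 1
  omega

end Stmt16Aux


theorem stmt16 {V : Type*} [Infinite V] (G : SimpleGraph V) (hconn : G.Connected)
    (hlf : ∀ v : V, Set.Finite {u | G.Adj v u})
    (X : Set V) (hX : X.Infinite) :
    ∃ v : ℕ → V,
      (∀ i, G.Adj (v i) (v (i + 1))) ∧
      (∀ u : V, ∃ s : Finset ℕ, s.card ≤ 2 ∧ ∀ i, v i = u → i ∈ s) ∧
      Set.Infinite {x ∈ X | ∃ i, v i = x} := by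
  classical
  open Stmt16Aux in
  have hne : Nonempty V := inferInstance
  let r : V := Classical.arbitrary V
  let s : Stmt16Aux.Setup V := ⟨G, r, hconn, hlf, X, hX⟩
  refine ⟨s.wk, ?_, ?_, ?_⟩
  · -- adjacency
    intro i
    have h1 : s.off (s.segf i) ≤ i := s.segf_le i
    have h2 : i < s.off (s.segf i + 1) := s.segf_lt i
    set n := s.segf i with hn
    have hl : s.len n = s.Kn n + s.jn n + 1 := rfl
    have ho := s.off_succ n
    set t := i - s.off n with htdef
    have hti : i = s.off n + t := by omega
    have ht : t ≤ s.Kn n + s.jn n := by omega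
    have hjKn := s.hjK n
    have hvi : s.wk i = s.fn n t := by rw [hti]; exact s.wk_eq n t ht
    by_cases hlast : t = s.Kn n + s.jn n
    · have hi1 : i + 1 = s.off (n+1) + 0 := by omega
      have hv2 : s.wk (i+1) = s.fn (n+1) 0 := by rw [hi1]; exact s.wk_eq (n+1) 0 (by omega)
      have hfn1 : s.fn (n+1) 0 = s.vtx (n+1) := by
        rw [Setup.fn, if_pos (Nat.zero_le _), Nat.sub_zero]
        exact s.hancK (n+1)
      have hfnlast : s.fn n t = s.wn n (s.jn n) := by
        by_cases hj0 : s.jn n = 0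
        · rw [Setup.fn, if_pos (by omega)]
          congr 1
          omega
        · rw [Setup.fn, if_neg (by omega)]
          congr 1
          omega
      rw [hvi, hv2, hfn1, hfnlast]
      have hner : s.vtx (n+1) ≠ s.r := by
        intro h
        have hd := s.hdnxt n
        rw [h, SimpleGraph.dist_self] at hd
        omega
      have h := (par_spec s.G s.r s.hconn hner).1
      rw [s.hpar n] at h
      exact h
    · have hv2 : s.wk (i+1) = s.fn n (t+1) := by
        rw [show i + 1 = s.off n + (t+1) from by omega]
        exact s.wk_eq n (t+1) (by omega)
      rw [hvi, hv2]
      by_cases h1' : t + 1 ≤ s.Kn n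
      · rw [Setup.fn, Setup.fn, if_pos (by omega : t ≤ s.Kn n), if_pos h1']
        have h := s.hadjw n (i := s.Kn n - (t+1)) (by omega)
        rw [show s.Kn n - (t+1) + 1 = s.Kn n - t from by omega] at h
        exact h
      · by_cases h2' : t ≤ s.Kn n
        · rw [Setup.fn, Setup.fn, if_pos h2', if_neg h1']
          rw [show s.Kn n - t = 0 from by omega, show t + 1 - s.Kn n = 1 from by omega]
          exact (s.hadjw n (i := 0) (by have := s.hK1 n; omega)).symm
        · rw [Setup.fn, Setup.fn, if_neg h2', if_neg h1']
          rw [show t + 1 - s.Kn n = (t - s.Kn n) + 1 from by omega]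
          exact (s.hadjw n (i := t - s.Kn n) (by omega)).symm
  · -- each vertex visited at most twice
    intro u
    have hfn_cases : ∀ n t, t ≤ s.Kn n + s.jn n → ∃ a ≤ s.Kn n, s.fn n t = s.wn n a := by
      intro n t ht
      by_cases h : t ≤ s.Kn n
      · exact ⟨s.Kn n - t, by omega, by rw [Setup.fn, if_pos h]⟩
      · exact ⟨t - s.Kn n, by have := s.hjK n; omega, by rw [Setup.fn, if_neg h]⟩
    have hwkmem : ∀ i, ∃ a ≤ s.Kn (s.segf i), s.wk i = s.wn (s.segf i) a := by
      intro i
      have h1 := s.segf_le i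
      have h2 := s.segf_lt i
      have hl : s.len (s.segf i) = s.Kn (s.segf i) + s.jn (s.segf i) + 1 := rfl
      have ho := s.off_succ (s.segf i)
      obtain ⟨a, ha, he⟩ := hfn_cases (s.segf i) (i - s.off (s.segf i)) (by omega)
      exact ⟨a, ha, by rw [Setup.wk]; exact he⟩
    by_cases hu : ∃ i, s.wk i = u
    · obtain ⟨i₀, hi₀⟩ := hu
      set n₀ := s.segf i₀ with hn₀
      obtain ⟨a₀, ha₀, he₀⟩ := hwkmem i₀
      have hseg_all : ∀ i, s.wk i = u → s.segf i = n₀ := by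
        intro i h
        obtain ⟨a, ha, he⟩ := hwkmem i
        have heq : s.wn (s.segf i) a = s.wn n₀ a₀ := by
          rw [← he, ← he₀, h, hi₀]
        rcases lt_trichotomy (s.segf i) n₀ with hlt | hse | hgt
        · exact absurd heq (s.hdisj hlt ha ha₀)
        · exact hse
        · exact absurd heq.symm (s.hdisj hgt ha₀ ha)
      have key : ∀ i i', s.wk i = u → s.wk i' = u →
          ((i - s.off n₀ ≤ s.Kn n₀) ↔ (i' - s.off n₀ ≤ s.Kn n₀)) → i = i' := by
        intro i i' h h' hiff
        have e1 := hseg_all i h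
        have e2 := hseg_all i' h'
        have ho1 : s.off n₀ ≤ i := by have := s.segf_le i; rw [e1] at this; exact this
        have ho2 : s.off n₀ ≤ i' := by have := s.segf_le i'; rw [e2] at this; exact this
        have hb1 : i < s.off (n₀ + 1) := by have := s.segf_lt i; rw [e1] at this; exact this
        have hb2 : i' < s.off (n₀ + 1) := by have := s.segf_lt i'; rw [e2] at this; exact this
        have hl : s.len n₀ = s.Kn n₀ + s.jn n₀ + 1 := rfl
        have ho := s.off_succ n₀
        have hjKn := s.hjK n₀
        have hft : s.fn n₀ (i - s.off n₀) = u := by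
          have hw : s.wk i = s.fn n₀ (i - s.off n₀) := by rw [Setup.wk, e1]
          rw [← hw]; exact h
        have hft' : s.fn n₀ (i' - s.off n₀) = u := by
          have hw : s.wk i' = s.fn n₀ (i' - s.off n₀) := by rw [Setup.wk, e2]
          rw [← hw]; exact h'
        by_cases hc : i - s.off n₀ ≤ s.Kn n₀
        · have hc' : i' - s.off n₀ ≤ s.Kn n₀ := hiff.mp hc
          have hw1 : s.wn n₀ (s.Kn n₀ - (i - s.off n₀)) = u := by
            rw [← hft, Setup.fn, if_pos hc]
          have hw2 : s.wn n₀ (s.Kn n₀ - (i' - s.off n₀)) = u := by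
            rw [← hft', Setup.fn, if_pos hc']
          have := s.hwinj n₀ (i := s.Kn n₀ - (i - s.off n₀)) (i' := s.Kn n₀ - (i' - s.off n₀))
            (by omega) (by omega) (by rw [hw1, hw2])
          omega
        · have hc' : ¬ (i' - s.off n₀ ≤ s.Kn n₀) := fun hx => hc (hiff.mpr hx)
          have hw1 : s.wn n₀ ((i - s.off n₀) - s.Kn n₀) = u := by
            rw [← hft, Setup.fn, if_neg hc]
          have hw2 : s.wn n₀ ((i' - s.off n₀) - s.Kn n₀) = u := by
            rw [← hft', Setup.fn, if_neg hc']
          have := s.hwinj n₀ (i := (i - s.off n₀) - s.Kn n₀) (i' := (i' - s.off n₀) - s.Kn n₀)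
            (by omega) (by omega) (by rw [hw1, hw2])
          omega
      refine ⟨{(if hA : ∃ i, s.wk i = u ∧ i - s.off n₀ ≤ s.Kn n₀ then hA.choose else 0),
               (if hB : ∃ i, s.wk i = u ∧ ¬ (i - s.off n₀ ≤ s.Kn n₀) then hB.choose else 0)},
              ?_, ?_⟩
      · exact le_trans (Finset.card_insert_le _ _) (by simp)
      · intro i hi
        by_cases hc : i - s.off n₀ ≤ s.Kn n₀
        · have hA' : ∃ i, s.wk i = u ∧ i - s.off n₀ ≤ s.Kn n₀ := ⟨i, hi, hc⟩
          have hsp := hA'.choose_spec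
          have hieq : i = hA'.choose := key i _ hi hsp.1 (iff_of_true hc hsp.2)
          rw [Finset.mem_insert]
          left
          rw [dif_pos hA', ← hieq]
        · have hB' : ∃ i, s.wk i = u ∧ ¬ (i - s.off n₀ ≤ s.Kn n₀) := ⟨i, hi, hc⟩
          have hsp := hB'.choose_spec
          have hieq : i = hB'.choose := key i _ hi hsp.1 (iff_of_false hc hsp.2)
          rw [Finset.mem_insert]
          right
          rw [Finset.mem_singleton, dif_pos hB', ← hieq]
    · exact ⟨∅, by simp, fun i h => absurd ⟨i, h⟩ hu⟩
  · -- infinitely many elements of X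
    apply Set.infinite_of_injective_forall_mem (f := fun n : ℕ => s.xn n)
    · intro a b h
      by_contra hne2
      have hxa : s.wn a 0 = s.xn a := rfl
      have hxb : s.wn b 0 = s.xn b := rfl
      rcases Nat.lt_or_ge a b with hlt | hge
      · exact s.hdisj hlt (Nat.zero_le _) (Nat.zero_le _) (by rw [hxa, hxb]; exact h)
      · have hlt : b < a := by omega
        exact s.hdisj hlt (Nat.zero_le _) (Nat.zero_le _) (by rw [hxa, hxb]; exact h.symm)
    · intro n
      refine ⟨s.hxX n, ⟨s.off n + s.Kn n, ?_⟩⟩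
      rw [s.wk_eq n (s.Kn n) (by omega)]
      rw [Setup.fn, if_pos le_rfl, Nat.sub_self]
      rfl
end
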